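/- Let (a_k)_{k ∈ ℕ} be real numbers with a₀ = a₁ = 0 and let g := Σ_k a_k X^k be the corresponding formal power series over ℝ. The exponential series E := Σ_{n ≥ 0} gⁿ/n! is a well-defined formal power series, and for every k ≥ 1 its k-th coefficient satisfies k!·(coefficient of X^k in E) = Σ_n (k!/(#OPⁿ(k))!)·∏_{j ∈ OPⁿ(k)} a_j, where the sum runs over all ordered partitions (compositions) OPⁿ(k) of k whose parts are all at least 2, and #OPⁿ(k) denotes the number of parts. -/

import Mathlib

open PowerSeries Finset

private lemma list_range_map_prod {M : Type*} [CommMonoid M] (f : ℕ → M) (n : ℕ) :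
    ((List.range n).map f).prod = ∏ i ∈ Finset.range n, f i := by
  induction n with
  | zero => simp
  | succ n ih =>
      rw [List.range_succ, List.map_append, List.prod_append, Finset.prod_range_succ, ih]
      simp

private lemma list_range_map_sum (f : ℕ → ℕ) (n : ℕ) :
    ((List.range n).map f).sum = ∑ i ∈ Finset.range n, f i := by
  induction n with
  | zero => simp
  | succ n ih =>
      rw [List.range_succ, List.map_append, List.sum_append, Finset.sum_range_succ, ih]
      simp

private lemma list_map_range_getD (L : List ℕ) :
    (List.range L.length).map (fun i => L.getD i 0) = L := by
  apply List.ext_getElem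
  · simp
  · intro i h1 h2
    simp only [List.getElem_map, List.getElem_range]
    exact List.getD_eq_getElem L 0 h2

private noncomputable def compFinsupp {k : ℕ} (c : Composition k) : ℕ →₀ ℕ :=
  Finsupp.onFinset (Finset.range c.blocks.length) (fun i => c.blocks.getD i 0)
    (fun i hi => Finset.mem_range.2 (by
      by_contra h
      push_neg at h
      exact hi (List.getD_eq_default _ _ h)))

@[simp] private lemma compFinsupp_apply {k : ℕ} (c : Composition k) (i : ℕ) :
    compFinsupp c i = c.blocks.getD i 0 := rfl

/-- The coefficient of `X^k` in `(mk a)^n` as a sum over compositions of `k` of length `n`,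
assuming `a 0 = 0`. -/
private lemma coeff_pow_composition (a : ℕ → ℝ) (h0 : a 0 = 0) (k n : ℕ) :
    PowerSeries.coeff k ((PowerSeries.mk a) ^ n) =
    ∑ c ∈ Finset.univ.filter (fun c : Composition k => c.length = n),
      (c.blocks.map a).prod := by
  rw [PowerSeries.coeff_pow]
  simp only [PowerSeries.coeff_mk]
  rw [← Finset.sum_filter_of_ne
      (p := fun l : ℕ →₀ ℕ => ∀ i ∈ Finset.range n, l i ≠ 0)
      (by
        intro l _ hl i hi hli
        exact hl (Finset.prod_eq_zero hi (by rw [hli]; exact h0)))]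
  refine Finset.sum_bij'
    (i := fun l hl =>
      ⟨(List.range n).map l, ?_, ?_⟩)
    (j := fun c _ => compFinsupp c)
    ?_ ?_ ?_ ?_ ?_
  · -- blocks positive
    intro i hi
    simp only [Finset.mem_filter, Finset.mem_finsuppAntidiag] at hl
    rcases List.mem_map.1 hi with ⟨j, hj, rfl⟩
    exact Nat.pos_of_ne_zero (hl.2 j (by simpa using hj))
  · -- blocks sum
    simp only [Finset.mem_filter, Finset.mem_finsuppAntidiag] at hl
    rw [list_range_map_sum]
    exact hl.1.1
  · -- i maps into target
    intro l hl
    simp only [Finset.mem_filter, Finset.mem_univ, true_and, Composition.length]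
    simp
  · -- j maps into source
    intro c hc
    simp only [Finset.mem_filter, Finset.mem_univ, true_and] at hc
    have hlen : c.blocks.length = n := hc
    rw [Finset.mem_filter, Finset.mem_finsuppAntidiag]
    refine ⟨⟨?_, ?_⟩, ?_⟩
    · have : ∑ i ∈ Finset.range n, c.blocks.getD i 0 = c.blocks.sum := by
        conv_rhs => rw [← list_map_range_getD c.blocks, hlen]
        rw [list_range_map_sum]
      exact this.trans c.blocks_sum
    · intro i hi
      have := compFinsupp c |>.mem_support_toFun i
      have h2 : c.blocks.getD i 0 ≠ 0 := by
        simpa [compFinsupp] using hi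
      rw [Finset.mem_range, ← hlen]
      by_contra h
      push_neg at h
      exact h2 (List.getD_eq_default _ _ h)
    · intro i hi
      simp only [compFinsupp_apply]
      have hilt : i < c.blocks.length := by rw [hlen]; exact Finset.mem_range.1 hi
      rw [List.getD_eq_getElem _ _ hilt]
      exact (c.blocks_pos (List.getElem_mem hilt)).ne'
  · -- left inverse
    intro l hl
    simp only [Finset.mem_filter, Finset.mem_finsuppAntidiag] at hl
    ext i
    simp only [compFinsupp_apply]
    by_cases hi : i < n
    · have : i < ((List.range n).map l).length := by simpa using hi
      rw [List.getD_eq_getElem _ _ this]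
      simp
    · have h1 : ((List.range n).map ⇑l).getD i 0 = 0 :=
        List.getD_eq_default _ _ (by simpa using Nat.le_of_not_lt hi)
      rw [h1]
      by_contra h
      have : i ∈ l.support := Finsupp.mem_support_iff.2 fun hh => h hh.symm
      have := hl.1.2 this
      simp only [Finset.mem_range] at this
      exact hi this
  · -- right inverse
    intro c hc
    simp only [Finset.mem_filter, Finset.mem_univ, true_and] at hc
    have hlen : c.blocks.length = n := hc
    apply Composition.ext
    show (List.range n).map (⇑(compFinsupp c)) = c.blocks
    conv_rhs => rw [← list_map_range_getD c.blocks, hlen]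
    rfl
  · -- values
    intro l hl
    simp only
    rw [List.map_map, list_range_map_prod]
    rfl

theorem exp_series_coeff_compositions (a : ℕ → ℝ) (h0 : a 0 = 0) (h1 : a 1 = 0)
    (k : ℕ) (hk : 1 ≤ k) :
    (∀ n : ℕ, k < n → PowerSeries.coeff k ((PowerSeries.mk a) ^ n) = 0) ∧
    (k.factorial : ℝ) *
        ∑ n ∈ Finset.range (k + 1),
          PowerSeries.coeff k ((PowerSeries.mk a) ^ n) / (n.factorial : ℝ) =
      ∑ c : Composition k,
        if ∀ j ∈ c.blocks, 2 ≤ j then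
          ((k.factorial : ℝ) / (c.length.factorial : ℝ)) * (c.blocks.map a).prod
        else 0 := by
  constructor
  · intro n hn
    rw [coeff_pow_composition a h0]
    apply Finset.sum_eq_zero
    intro c hc
    simp only [Finset.mem_filter, Finset.mem_univ, true_and] at hc
    exact absurd (hc ▸ c.length_le) (by omega)
  · -- main computation
    have step1 : ∀ c : Composition k,
        (if ∀ j ∈ c.blocks, 2 ≤ j then
            ((k.factorial : ℝ) / (c.length.factorial : ℝ)) * (c.blocks.map a).prod
          else 0)
        = ((k.factorial : ℝ) / (c.length.factorial : ℝ)) * (c.blocks.map a).prod := by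
      intro c
      by_cases h : ∀ j ∈ c.blocks, 2 ≤ j
      · rw [if_pos h]
      · rw [if_neg h]
        push_neg at h
        rcases h with ⟨j, hj, hj2⟩
        have hj1 : j = 1 := by
          have := c.blocks_pos hj
          omega
        have : (c.blocks.map a).prod = 0 := by
          apply List.prod_eq_zero
          rw [List.mem_map]
          exact ⟨j, hj, by rw [hj1]; exact h1⟩
        rw [this, mul_zero]
    rw [Finset.sum_congr rfl fun c _ => step1 c]
    rw [Finset.mul_sum]
    have step2 : ∀ n ∈ Finset.range (k + 1),
        (k.factorial : ℝ) * (PowerSeries.coeff k ((PowerSeries.mk a) ^ n) / (n.factorial : ℝ))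
        = ∑ c ∈ Finset.univ.filter (fun c : Composition k => c.length = n),
            ((k.factorial : ℝ) / (c.length.factorial : ℝ)) * (c.blocks.map a).prod := by
      intro n _
      rw [coeff_pow_composition a h0, Finset.sum_div, Finset.mul_sum]
      apply Finset.sum_congr rfl
      intro c hc
      simp only [Finset.mem_filter, Finset.mem_univ, true_and] at hc
      rw [hc]
      ring
    rw [Finset.sum_congr rfl step2]
    exact Finset.sum_fiberwise_of_maps_to
      (fun c _ => Finset.mem_range.2 (Nat.lt_succ_of_le c.length_le)) _
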